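/- Suppose that for each k ∈ {1,…,s} there exist finite words (η_1,…,η_P) ∈ {1,…,m}^P and (ω_1,…,ω_Q) ∈ {1,…,m}^Q such that T_{η_1…η_P}(a_k) ∈ ⋃_{i=1}^s (a_i, b_i) and T_{ω_1…ω_Q}(b_k) ∈ ⋃_{i=1}^s (a_i, b_i). Then Ũ is a subshift of finite type. -/

import Mathlib

open Filter Topology Set

/-- `ifsIter m f i n = f_{i₁} ∘ ⋯ ∘ f_{iₙ} (0)`. -/
noncomputable def ifsIter (m : ℕ) (f : Fin m → ℝ → ℝ) : (ℕ → Fin m) → ℕ → ℝ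
  | _, 0 => 0
  | i, n + 1 => f (i 0) (ifsIter m f (fun k => i (k + 1)) n)

/-- Apply `T_{i₁…i_N}` (i.e. `T_{i_N} ∘ ⋯ ∘ T_{i₁}`) to `x`. -/
noncomputable def invIterWord (m : ℕ) (T : Fin m → ℝ → ℝ) (w : List (Fin m)) (x : ℝ) : ℝ :=
  w.foldl (fun y j => T j y) x

/-- shift a sequence by `n` -/
def shiftSeq {m : ℕ} (n : ℕ) (i : ℕ → Fin m) : ℕ → Fin m := fun k => i (k + n)

/-- first `n` letters of a sequence -/
def preWord {m : ℕ} (i : ℕ → Fin m) (n : ℕ) : List (Fin m) := (List.range n).map i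

def consSeq {m : ℕ} (a : Fin m) (t : ℕ → Fin m) : ℕ → Fin m :=
  fun k => match k with
  | 0 => a
  | k + 1 => t k

lemma preWord_zero {m : ℕ} (i : ℕ → Fin m) : preWord i 0 = [] := rfl

lemma preWord_succ {m : ℕ} (i : ℕ → Fin m) (n : ℕ) :
    preWord i (n + 1) = preWord i n ++ [i n] := by
  simp [preWord, List.range_succ]

lemma preWord_succ' {m : ℕ} (i : ℕ → Fin m) (n : ℕ) :
    preWord i (n + 1) = i 0 :: preWord (shiftSeq 1 i) n := by
  apply List.ext_getElem
  · simp [preWord]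
  · intro q h1 h2
    match q with
    | 0 => simp [preWord]
    | q + 1 =>
      simp only [preWord, List.getElem_cons_succ, List.getElem_map, List.getElem_range]
      rfl

lemma preWord_length {m : ℕ} (i : ℕ → Fin m) (n : ℕ) : (preWord i n).length = n := by
  simp [preWord]

lemma preWord_getElem {m : ℕ} (i : ℕ → Fin m) (n q : ℕ) (h : q < (preWord i n).length) :
    (preWord i n)[q] = i q := by
  simp [preWord] at h ⊢

lemma shiftSeq_shiftSeq {m : ℕ} (p n : ℕ) (i : ℕ → Fin m) :
    shiftSeq p (shiftSeq n i) = shiftSeq (n + p) i := by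
  funext k; simp only [shiftSeq]; congr 1; omega

lemma shiftSeq_zero {m : ℕ} (i : ℕ → Fin m) : shiftSeq 0 i = i := by
  funext k; simp [shiftSeq]

lemma shiftSeq_consSeq {m : ℕ} (a : Fin m) (t : ℕ → Fin m) :
    shiftSeq 1 (consSeq a t) = t := by
  funext k; rfl

lemma consSeq_zero {m : ℕ} (a : Fin m) (t : ℕ → Fin m) : consSeq a t 0 = a := rfl

lemma ifsIter_eq {m : ℕ} (f : Fin m → ℝ → ℝ) :
    ∀ (n : ℕ) (i : ℕ → Fin m), ifsIter m f i n = (preWord i n).foldr f 0 := by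
  intro n
  induction n with
  | zero => intro i; rfl
  | succ n ih =>
      intro i
      rw [preWord_succ', List.foldr_cons, ← ih (shiftSeq 1 i)]
      rfl

lemma invIterWord_append {m : ℕ} (T : Fin m → ℝ → ℝ) (v w : List (Fin m)) (x : ℝ) :
    invIterWord m T (v ++ w) x = invIterWord m T w (invIterWord m T v x) := by
  simp [invIterWord, List.foldl_append]

lemma invIterWord_cons {m : ℕ} (T : Fin m → ℝ → ℝ) (a : Fin m) (w : List (Fin m)) (x : ℝ) :
    invIterWord m T (a :: w) x = invIterWord m T w (T a x) := rfl

lemma foldr_append_singleton {m : ℕ} (f : Fin m → ℝ → ℝ) (w : List (Fin m)) (a : Fin m) (x : ℝ) :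
    (w ++ [a]).foldr f x = w.foldr f (f a x) := by
  simp [List.foldr_append]
/-- prepend a finite word to a sequence -/
def appSeq {m : ℕ} (w : List (Fin m)) (t : ℕ → Fin m) : ℕ → Fin m :=
  fun k => if h : k < w.length then w[k] else t (k - w.length)

lemma appSeq_nil {m : ℕ} (t : ℕ → Fin m) : appSeq [] t = t := by
  funext k; simp [appSeq]

lemma appSeq_cons {m : ℕ} (a : Fin m) (w : List (Fin m)) (t : ℕ → Fin m) :
    appSeq (a :: w) t = consSeq a (appSeq w t) := by
  funext k
  match k with
  | 0 => simp [appSeq, consSeq]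
  | k + 1 =>
    simp only [appSeq, consSeq, List.length_cons]
    by_cases h : k < w.length
    · rw [dif_pos (by omega), dif_pos h]; simp
    · rw [dif_neg (by omega), dif_neg h]; congr 1; omega

lemma appSeq_ge {m : ℕ} (w : List (Fin m)) (t : ℕ → Fin m) (q : ℕ) :
    appSeq w t (w.length + q) = t q := by
  simp only [appSeq]
  rw [dif_neg (by omega)]
  congr 1; omega
section lip
variable {m : ℕ} (r c : Fin m → ℝ) (f T : Fin m → ℝ → ℝ)

lemma foldr_lip (hf : ∀ j x, f j x = r j * x + c j) (hr0 : ∀ j, 0 < r j)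
    (ρ : ℝ) (hρ0 : 0 ≤ ρ) (hρ : ∀ j, r j ≤ ρ) :
    ∀ (w : List (Fin m)) (x y : ℝ),
      |w.foldr f x - w.foldr f y| ≤ ρ ^ w.length * |x - y| := by
  intro w
  induction w with
  | nil => intro x y; simp
  | cons a w ih =>
    intro x y
    simp only [List.foldr_cons, List.length_cons]
    rw [hf, hf]
    calc |(r a * w.foldr f x + c a) - (r a * w.foldr f y + c a)|
        = r a * |w.foldr f x - w.foldr f y| := by
          rw [show (r a * w.foldr f x + c a) - (r a * w.foldr f y + c a)
              = r a * (w.foldr f x - w.foldr f y) by ring, abs_mul,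
            abs_of_pos (hr0 a)]
      _ ≤ ρ * (ρ ^ w.length * |x - y|) :=
          mul_le_mul (hρ a) (ih x y) (abs_nonneg _)
            (le_trans (le_of_lt (hr0 a)) (hρ a))
      _ = ρ ^ (w.length + 1) * |x - y| := by ring

lemma invIterWord_lip (hT : ∀ j x, T j x = (x - c j) / r j) (hr0 : ∀ j, 0 < r j)
    (rm : ℝ) (hrm0 : 0 < rm) (hrm : ∀ j, rm ≤ r j) :
    ∀ (w : List (Fin m)) (x y : ℝ),
      |invIterWord m T w x - invIterWord m T w y| ≤ (1 / rm) ^ w.length * |x - y| := by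
  intro w
  induction w with
  | nil => intro x y; rw [List.length_nil, pow_zero, one_mul]; exact le_refl _
  | cons a w ih =>
    intro x y
    rw [invIterWord_cons, invIterWord_cons, List.length_cons]
    calc |invIterWord m T w (T a x) - invIterWord m T w (T a y)|
        ≤ (1 / rm) ^ w.length * |T a x - T a y| := ih _ _
      _ ≤ (1 / rm) ^ w.length * ((1 / rm) * |x - y|) := by
          apply mul_le_mul_of_nonneg_left _ (by positivity)
          rw [hT, hT, div_sub_div_same,
            show x - c a - (y - c a) = x - y by ring, abs_div,
            abs_of_pos (hr0 a), div_eq_mul_inv, one_div, mul_comm]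
          apply mul_le_mul_of_nonneg_right _ (abs_nonneg _)
          exact inv_anti₀ hrm0 (hrm a)
      _ = (1 / rm) ^ (w.length + 1) * |x - y| := by ring

lemma invIterWord_pred (P : ℝ → Prop) (h : ∀ j x, P x → P (T j x)) :
    ∀ (w : List (Fin m)) (x : ℝ), P x → P (invIterWord m T w x) := by
  intro w
  induction w with
  | nil => intro x hx; exact hx
  | cons a w ih => intro x hx; rw [invIterWord_cons]; exact ih _ (h a x hx)

end lip
set_option maxHeartbeats 1600000 in
/-- if every endpoint of every switch region can be mapped by a finite
composition of the inverse maps into the interior of some switch region, then the set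
of unique codings `Ũ` is a subshift of finite type. -/
theorem stmt3 (m : ℕ) (hm : 2 ≤ m) (r c : Fin m → ℝ)
    (hr : ∀ j, 0 < r j ∧ r j < 1)
    (f : Fin m → ℝ → ℝ) (hf : ∀ j x, f j x = r j * x + c j)
    (T : Fin m → ℝ → ℝ) (hT : ∀ j x, T j x = (x - c j) / r j)
    (A B : ℝ) (hAB : A < B)
    (K : Set ℝ) (hK : K = Icc A B) (hKattr : K = ⋃ j, f j '' K)
    (proj : (ℕ → Fin m) → ℝ)
    (hproj : ∀ i : ℕ → Fin m, Tendsto (ifsIter m f i) atTop (𝓝 (proj i)))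
    (U : Set ℝ)
    (hU : U = {x | x ∈ K ∧ ∃! i : ℕ → Fin m, Tendsto (ifsIter m f i) atTop (𝓝 x)})
    (Ut : Set (ℕ → Fin m)) (hUt : Ut = proj ⁻¹' U)
    -- the switch regions: exactly `s` pairs of first-level intervals intersect,
    -- each intersection `H_k = [a_k, b_k]` is a nondegenerate interval in the
    -- interior of `K`, and the `H_k` are pairwise disjoint
    (s : ℕ) (hs : 1 ≤ s)
    (ik jk : Fin s → Fin m) (hkne : ∀ k, ik k ≠ jk k)
    (aH bH : Fin s → ℝ)
    (hH : ∀ k, f (ik k) '' K ∩ f (jk k) '' K = Icc (aH k) (bH k))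
    (hHnd : ∀ k, aH k < bH k)
    (hHint : ∀ k, Icc (aH k) (bH k) ⊆ Ioo A B)
    (hHdisj : ∀ k l, k ≠ l → Disjoint (Icc (aH k) (bH k)) (Icc (aH l) (bH l)))
    (hcomplete : ∀ p q : Fin m, p ≠ q → (f p '' K ∩ f q '' K).Nonempty →
      ∃ k, (p = ik k ∧ q = jk k) ∨ (p = jk k ∧ q = ik k))
    -- the hypothesis of Theorem 4: both endpoints of every switch region are
    -- eventually mapped into the union of the interiors of the switch regions
    (hyp : ∀ k : Fin s,
      (∃ w : List (Fin m), invIterWord m T w (aH k) ∈ ⋃ i, Ioo (aH i) (bH i)) ∧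
      (∃ w : List (Fin m), invIterWord m T w (bH k) ∈ ⋃ i, Ioo (aH i) (bH i))) :
    ∃ (L : ℕ) (F : Finset (Fin L → Fin m)),
      Ut = {x : ℕ → Fin m | ∀ k : ℕ, (fun j : Fin L => x (k + j)) ∉ F} := by
  classical
  have hm0 : 0 < m := by omega
  have j0 : Fin m := ⟨0, hm0⟩
  have k0 : Fin s := ⟨0, hs⟩
  set HH : Set ℝ := ⋃ k, Icc (aH k) (bH k) with hHHdef
  set Ho : Set ℝ := ⋃ k, Ioo (aH k) (bH k) with hHodef
  set Ii : Fin m → Set ℝ := fun j => f j '' K with hIidef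
  -- contraction constants
  obtain ⟨ρ, hρ1, hρ0, hρ⟩ : ∃ ρ, ρ < 1 ∧ 0 < ρ ∧ ∀ j, r j ≤ ρ := by
    refine ⟨Finset.univ.sup' ⟨j0, Finset.mem_univ _⟩ r, ?_, ?_, ?_⟩
    · exact (Finset.sup'_lt_iff _).2 fun j _ => (hr j).2
    · exact lt_of_lt_of_le (hr j0).1 (Finset.le_sup' r (Finset.mem_univ j0))
    · intro j; exact Finset.le_sup' r (Finset.mem_univ j)
  obtain ⟨rm, hrm0, hrm1, hrm⟩ : ∃ rm, 0 < rm ∧ rm ≤ 1 ∧ ∀ j, rm ≤ r j := by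
    refine ⟨Finset.univ.inf' ⟨j0, Finset.mem_univ _⟩ r, ?_, ?_, ?_⟩
    · exact (Finset.lt_inf'_iff _).2 fun j _ => (hr j).1
    · exact le_trans (Finset.inf'_le r (Finset.mem_univ j0)) (hr j0).2.le
    · intro j; exact Finset.inf'_le r (Finset.mem_univ j)
  obtain ⟨W, hW0, hW⟩ : ∃ W, 0 < W ∧ ∀ k, W ≤ bH k - aH k := by
    refine ⟨Finset.univ.inf' ⟨k0, Finset.mem_univ _⟩ (fun k => bH k - aH k), ?_, ?_⟩
    · exact (Finset.lt_inf'_iff _).2 fun k _ => sub_pos.2 (hHnd k)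
    · intro k; exact Finset.inf'_le _ (Finset.mem_univ k)
  -- basic function facts
  have hfT : ∀ j x, f j (T j x) = x := by
    intro j x
    have h0 := (hr j).1.ne'
    rw [hT, hf]; field_simp; ring
  have hTf : ∀ j x, T j (f j x) = x := by
    intro j x
    have h0 := (hr j).1.ne'
    rw [hT, hf]; field_simp; ring
  have hfm : ∀ j, f j A ≤ f j B := by
    intro j; rw [hf, hf]
    have := (hr j).1
    nlinarith [hAB.le]
  have hIK : ∀ j, Ii j ⊆ K := by
    intro j x hx; rw [hKattr]; exact mem_iUnion.2 ⟨j, hx⟩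
  have hIicc : ∀ j, Ii j = Icc (f j A) (f j B) := by
    intro j; ext z
    constructor
    · rintro ⟨w, hw, rfl⟩
      rw [hK, mem_Icc] at hw
      rw [mem_Icc, hf, hf, hf]
      have := (hr j).1
      constructor <;> nlinarith [hw.1, hw.2]
    · intro hz
      rw [mem_Icc] at hz
      refine ⟨T j z, ?_, hfT j z⟩
      have h1 : r j * A + c j ≤ z := by rw [← hf]; exact hz.1
      have h2 : z ≤ r j * B + c j := by rw [← hf]; exact hz.2
      rw [hK, mem_Icc, hT]
      constructor
      · rw [le_div_iff₀ (hr j).1]; linarith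
      · rw [div_le_iff₀ (hr j).1]; linarith
  have hfAB : ∀ j, A ≤ f j A ∧ f j B ≤ B := by
    intro j
    have h1 : f j A ∈ K := hIK j (by rw [hIicc j]; exact ⟨le_refl _, hfm j⟩)
    have h2 : f j B ∈ K := hIK j (by rw [hIicc j]; exact ⟨hfm j, le_refl _⟩)
    rw [hK, mem_Icc] at h1 h2
    exact ⟨h1.1, h2.2⟩
  have hcover : ∀ x, x ∈ K → ∃ j, x ∈ Ii j := by
    intro x hx
    rw [hKattr] at hx
    exact mem_iUnion.1 hx
  have hTmem : ∀ j x, x ∈ Ii j → T j x ∈ K := by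
    rintro j x ⟨w, hw, rfl⟩; rw [hTf]; exact hw
  have hcont : ∀ j, Continuous (f j) := by
    intro j
    have : f j = fun x => r j * x + c j := funext (hf j)
    rw [this]
    exact (continuous_const.mul continuous_id).add continuous_const
  -- escape lemmas
  have hTleA : ∀ (j : Fin m) x, x ≤ A → T j x ≤ A := by
    intro j x hx
    have hA' : A ≤ r j * A + c j := by rw [← hf]; exact (hfAB j).1
    rw [hT, div_le_iff₀ (hr j).1, mul_comm]; linarith
  have hTgeB : ∀ (j : Fin m) x, B ≤ x → B ≤ T j x := by
    intro j x hx
    have hB' : r j * B + c j ≤ B := by rw [← hf]; exact (hfAB j).2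
    rw [hT, le_div_iff₀ (hr j).1, mul_comm]; linarith
  have hTltA : ∀ (j : Fin m) x, x < A → T j x < A := by
    intro j x hx
    have hA' : A ≤ r j * A + c j := by rw [← hf]; exact (hfAB j).1
    rw [hT, div_lt_iff₀ (hr j).1, mul_comm]; linarith
  have hTgtB : ∀ (j : Fin m) x, B < x → B < T j x := by
    intro j x hx
    have hB' : r j * B + c j ≤ B := by rw [← hf]; exact (hfAB j).2
    rw [hT, lt_div_iff₀ (hr j).1, mul_comm]; linarith
  have escA : ∀ (w : List (Fin m)) x, x ≤ A → invIterWord m T w x ≤ A :=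
    invIterWord_pred T (· ≤ A) hTleA
  have escB : ∀ (w : List (Fin m)) x, B ≤ x → B ≤ invIterWord m T w x :=
    invIterWord_pred T (B ≤ ·) hTgeB
  have escA' : ∀ (w : List (Fin m)) x, x < A → invIterWord m T w x < A :=
    invIterWord_pred T (· < A) hTltA
  have escB' : ∀ (w : List (Fin m)) x, B < x → B < invIterWord m T w x :=
    invIterWord_pred T (B < ·) hTgtB
  have hperm : ∀ (u : List (Fin m)) (p : ℕ) x, invIterWord m T u x ∈ Icc A B →
      invIterWord m T (u.take p) x ∈ Icc A B := by
    intro u p x hmem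
    by_contra hout
    rw [mem_Icc, not_and_or] at hout
    have hud : u = u.take p ++ u.drop p := (List.take_append_drop p u).symm
    rw [hud, invIterWord_append] at hmem
    rcases hout with h | h
    · push_neg at h
      exact absurd hmem.1 (not_le.2 (escA' _ _ h))
    · push_neg at h
      exact absurd hmem.2 (not_le.2 (escB' _ _ h))
  -- fold preserves K, inverse relation
  have hinv : ∀ (w : List (Fin m)) x, invIterWord m T w (w.foldr f x) = x := by
    intro w
    induction w with
    | nil => intro x; rfl
    | cons a w ihw => intro x; rw [List.foldr_cons, invIterWord_cons, hTf]; exact ihw x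
  have foldK : ∀ (n : ℕ) (i : ℕ → Fin m) x, x ∈ K → (preWord i n).foldr f x ∈ K := by
    intro n
    induction n with
    | zero => intro i x hx; rw [preWord_zero]; exact hx
    | succ n ih =>
      intro i x hx
      rw [preWord_succ', List.foldr_cons]
      exact hIK (i 0) ⟨_, ih (shiftSeq 1 i) x hx, rfl⟩
  -- convergence helper
  have tends_of_bound : ∀ (g : ℕ → ℝ) (x C : ℝ), (∀ n, |g n - x| ≤ ρ ^ n * C) →
      Tendsto g atTop (𝓝 x) := by
    intro g x C hb
    rw [tendsto_iff_dist_tendsto_zero]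
    have hb0 : Tendsto (fun n => ρ ^ n * C) atTop (𝓝 0) := by
      have := (tendsto_pow_atTop_nhds_zero_of_lt_one hρ0.le hρ1).mul_const C
      simpa using this
    exact squeeze_zero (fun n => dist_nonneg)
      (fun n => by rw [Real.dist_eq]; exact hb n) hb0
  -- projections land in K
  have projK : ∀ i : ℕ → Fin m, proj i ∈ Icc A B := by
    intro i
    have hAK : A ∈ K := by rw [hK]; exact ⟨le_refl _, hAB.le⟩
    have hgK : ∀ n, (preWord i n).foldr f A ∈ Icc A B := by
      intro n; rw [← hK]; exact foldK n i A hAK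
    have hb : ∀ n, |(preWord i n).foldr f A - ifsIter m f i n| ≤ ρ ^ n * |A| := by
      intro n
      rw [ifsIter_eq f n i]
      have h2 := foldr_lip r c f hf (fun j => (hr j).1) ρ hρ0.le hρ (preWord i n) A 0
      rw [preWord_length] at h2
      simpa using h2
    have hgt : Tendsto (fun n => (preWord i n).foldr f A) atTop (𝓝 (proj i)) := by
      rw [tendsto_iff_dist_tendsto_zero]
      have h2 : Tendsto (fun n => ρ ^ n * |A| + dist (ifsIter m f i n) (proj i))
          atTop (𝓝 0) := by
        have ha := (tendsto_pow_atTop_nhds_zero_of_lt_one hρ0.le hρ1).mul_const |A|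
        have hb2 := tendsto_iff_dist_tendsto_zero.1 (hproj i)
        simpa using ha.add hb2
      apply squeeze_zero (fun n => dist_nonneg) _ h2
      intro n
      calc dist ((preWord i n).foldr f A) (proj i)
          ≤ dist ((preWord i n).foldr f A) (ifsIter m f i n)
            + dist (ifsIter m f i n) (proj i) := dist_triangle _ _ _
        _ ≤ ρ ^ n * |A| + dist (ifsIter m f i n) (proj i) := by
            have h3 := hb n
            rw [Real.dist_eq]
            exact add_le_add h3 le_rfl
    exact isClosed_Icc.mem_of_tendsto hgt (Filter.Eventually.of_forall hgK)
  have projF2 : ∀ i : ℕ → Fin m, proj i = f (i 0) (proj (shiftSeq 1 i)) := by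
    intro i
    have e1 : Tendsto (fun n => ifsIter m f i (n + 1)) atTop (𝓝 (proj i)) :=
      (hproj i).comp (tendsto_add_atTop_nat 1)
    have e2 : Tendsto (fun n => f (i 0) (ifsIter m f (shiftSeq 1 i) n)) atTop
        (𝓝 (f (i 0) (proj (shiftSeq 1 i)))) := ((hcont (i 0)).tendsto _).comp (hproj _)
    have e3 : (fun n => ifsIter m f i (n + 1)) =
        (fun n => f (i 0) (ifsIter m f (shiftSeq 1 i) n)) := rfl
    rw [e3] at e1
    exact tendsto_nhds_unique e1 e2
  have projPre : ∀ (i : ℕ → Fin m) (n : ℕ),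
      proj i = (preWord i n).foldr f (proj (shiftSeq n i)) := by
    intro i n
    induction n with
    | zero => rw [preWord_zero, shiftSeq_zero]; rfl
    | succ n ih =>
      rw [preWord_succ, foldr_append_singleton]
      have h0 : (shiftSeq n i) 0 = i n := by simp [shiftSeq]
      have h1 := projF2 (shiftSeq n i)
      rw [h0, shiftSeq_shiftSeq] at h1
      rw [← h1]
      exact ih
  have projTpre : ∀ (i : ℕ → Fin m) (n : ℕ),
      proj (shiftSeq n i) = invIterWord m T (preWord i n) (proj i) := by
    intro i n
    rw [projPre i n, hinv]
  have projdist : ∀ (i i' : ℕ → Fin m) (n : ℕ), (∀ q, q < n → i q = i' q) →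
      |proj i - proj i'| ≤ ρ ^ n * (B - A) := by
    intro i i' n hag
    have hpre : preWord i n = preWord i' n := by
      simp only [preWord]
      exact List.map_congr_left (fun a ha => hag a (List.mem_range.1 ha))
    rw [projPre i n, projPre i' n, hpre]
    have h1 := foldr_lip r c f hf (fun j => (hr j).1) ρ hρ0.le hρ (preWord i' n)
      (proj (shiftSeq n i)) (proj (shiftSeq n i'))
    rw [preWord_length] at h1
    refine le_trans h1 (mul_le_mul_of_nonneg_left ?_ (by positivity))
    have p1 := projK (shiftSeq n i); have p2 := projK (shiftSeq n i')
    rw [mem_Icc] at p1 p2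
    rw [abs_le]; constructor <;> linarith [p1.1, p1.2, p2.1, p2.2]
  have projcons : ∀ (a : Fin m) (t : ℕ → Fin m), proj (consSeq a t) = f a (proj t) := by
    intro a t
    rw [projF2 (consSeq a t), shiftSeq_consSeq, consSeq_zero]
  have memI : ∀ i : ℕ → Fin m, proj i ∈ Ii (i 0) := by
    intro i
    rw [projF2 i]
    exact ⟨proj (shiftSeq 1 i), by rw [hK]; exact projK _, rfl⟩
  have memIshift : ∀ (i : ℕ → Fin m) (n : ℕ), proj (shiftSeq n i) ∈ Ii (i n) := by
    intro i n
    have h0 : (shiftSeq n i) 0 = i n := by simp [shiftSeq]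
    have := memI (shiftSeq n i)
    rwa [h0] at this
  have hcode : ∀ x, x ∈ Icc A B → ∃ i : ℕ → Fin m, proj i = x := by
    intro x hx
    have hxK : x ∈ K := by rw [hK]; exact hx
    set sym : ℝ → Fin m := fun y => if h : ∃ j, y ∈ Ii j then h.choose else j0 with hsymdef
    have hsymm : ∀ y, y ∈ K → y ∈ Ii (sym y) := by
      intro y hy
      have hex : ∃ j, y ∈ Ii j := hcover y hy
      simp only [hsymdef]
      rw [dif_pos hex]
      exact hex.choose_spec
    set orb : ℕ → ℝ := fun n => Nat.rec x (fun _ y => T (sym y) y) n with horbdef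
    have horbs : ∀ n, orb (n + 1) = T (sym (orb n)) (orb n) := fun n => rfl
    set i : ℕ → Fin m := fun n => sym (orb n) with hidef
    have horbK : ∀ n, orb n ∈ K := by
      intro n
      induction n with
      | zero => exact hxK
      | succ n ih => rw [horbs n]; exact hTmem _ _ (hsymm _ ih)
    have hfold : ∀ n, (preWord i n).foldr f (orb n) = x := by
      intro n
      induction n with
      | zero => rfl
      | succ n ih =>
        rw [preWord_succ, foldr_append_singleton]
        have : f (i n) (orb (n + 1)) = orb n := by
          rw [horbs n]; exact hfT _ _
        rw [this, ih]
    have hC : ∀ n, |orb n| ≤ max |A| |B| := by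
      intro n
      have h5 := horbK n
      rw [hK, mem_Icc] at h5
      rw [abs_le]
      refine ⟨?_, ?_⟩
      · have h6 := neg_abs_le A
        have h7 := le_max_left |A| |B|
        linarith [h5.1]
      · have h6 := le_abs_self B
        have h7 := le_max_right |A| |B|
        linarith [h5.2]
    have key : ∀ n, |ifsIter m f i n - x| ≤ ρ ^ n * max |A| |B| := by
      intro n
      rw [ifsIter_eq f n i]
      conv_lhs => rw [← hfold n]
      have h2 := foldr_lip r c f hf (fun j => (hr j).1) ρ hρ0.le hρ (preWord i n)
        0 (orb n)
      rw [preWord_length] at h2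
      refine le_trans h2 (mul_le_mul_of_nonneg_left ?_ (by positivity))
      rw [zero_sub, abs_neg]
      exact hC n
    exact ⟨i, tendsto_nhds_unique (hproj i) (tends_of_bound _ x _ key)⟩
  -- combinatorial facts
  have hdisj' : ∀ (x : ℝ) (k l : Fin s), x ∈ Icc (aH k) (bH k) → x ∈ Icc (aH l) (bH l) →
      k = l := by
    intro x k l h1 h2
    by_contra hne
    exact Set.disjoint_left.1 (hHdisj k l hne) h1 h2
  have huniq : ∀ x, x ∉ HH → ∀ p q, x ∈ Ii p → x ∈ Ii q → p = q := by
    intro x hx p q hp hq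
    by_contra hne
    obtain ⟨k, hc⟩ := hcomplete p q hne ⟨x, hp, hq⟩
    apply hx
    refine mem_iUnion.2 ⟨k, ?_⟩
    rw [← hH k]
    rcases hc with ⟨h1, h2⟩ | ⟨h1, h2⟩
    · exact ⟨by rw [← h1]; exact hp, by rw [← h2]; exact hq⟩
    · exact ⟨by rw [← h2]; exact hq, by rw [← h1]; exact hp⟩
  have hpair : ∀ x (l : Fin s) q, x ∈ Icc (aH l) (bH l) → x ∈ Ii q →
      q = ik l ∨ q = jk l := by
    intro x l q hxl hxq
    by_cases h1 : q = ik l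
    · exact Or.inl h1
    have hxik : x ∈ Ii (ik l) := by
      rw [← hH l] at hxl; exact hxl.1
    obtain ⟨k', hc⟩ := hcomplete q (ik l) h1 ⟨x, hxq, hxik⟩
    have hxk' : x ∈ Icc (aH k') (bH k') := by
      rw [← hH k']
      rcases hc with ⟨ha, hb⟩ | ⟨ha, hb⟩
      · exact ⟨by rw [← ha]; exact hxq, by rw [← hb]; exact hxik⟩
      · exact ⟨by rw [← hb]; exact hxik, by rw [← ha]; exact hxq⟩
    have hkl : k' = l := hdisj' x k' l hxk' hxl
    rcases hc with ⟨ha, hb⟩ | ⟨ha, hb⟩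
    · exfalso; exact hkne l (by rw [hb, hkl])
    · right; rw [ha, hkl]
  have hends : ∀ k, aH k = max (f (ik k) A) (f (jk k) A) ∧
      bH k = min (f (ik k) B) (f (jk k) B) := by
    intro k
    have he : Icc (max (f (ik k) A) (f (jk k) A)) (min (f (ik k) B) (f (jk k) B))
        = Icc (aH k) (bH k) := by
      rw [← Set.Icc_inter_Icc, ← hIicc, ← hIicc]
      exact hH k
    have hne : max (f (ik k) A) (f (jk k) A) ≤ min (f (ik k) B) (f (jk k) B) :=
      Set.nonempty_Icc.1 (he ▸ Set.nonempty_Icc.2 (hHnd k).le)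
    have h1 : aH k ∈ Icc (max (f (ik k) A) (f (jk k) A)) (min (f (ik k) B) (f (jk k) B)) := by
      rw [he]; exact ⟨le_refl _, (hHnd k).le⟩
    have h2 : max (f (ik k) A) (f (jk k) A) ∈ Icc (aH k) (bH k) := by
      rw [← he]; exact ⟨le_refl _, hne⟩
    have h3 : bH k ∈ Icc (max (f (ik k) A) (f (jk k) A)) (min (f (ik k) B) (f (jk k) B)) := by
      rw [he]; exact ⟨(hHnd k).le, le_refl _⟩
    have h4 : min (f (ik k) B) (f (jk k) B) ∈ Icc (aH k) (bH k) := by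
      rw [← he]; exact ⟨hne, le_refl _⟩
    exact ⟨le_antisymm h2.1 h1.1, le_antisymm h3.2 h4.2⟩
  -- shared image for nearby points
  have hstar : ∀ y z, y ∈ Icc A B → z ∈ Icc A B → y ∉ HH → |y - z| < W →
      ∃ d, y ∈ Ii d ∧ z ∈ Ii d := by
    intro y z hyI hzI hyH hd
    have hyK : y ∈ K := by rw [hK]; exact hyI
    set S : Finset (Fin m) := Finset.univ.filter (fun d => y ∈ Ii d) with hSdef
    have hSmem : ∀ d, d ∈ S ↔ y ∈ Ii d := by
      intro d; simp [hSdef]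
    have hSne : S.Nonempty := by
      obtain ⟨d, hdm⟩ := hcover y hyK
      exact ⟨d, (hSmem d).2 hdm⟩
    rcases le_or_gt y z with hyz | hzy
    · -- `y ≤ z` : walk to the right
      obtain ⟨d0, hd0S, hd0⟩ := Finset.exists_mem_eq_sup' hSne (fun d => f d B)
      set M := f d0 B with hMdef
      have hMsup : ∀ d ∈ S, f d B ≤ M := by
        intro d hdm
        rw [← hd0]
        exact Finset.le_sup' (fun d => f d B) hdm
      have hyd0 : y ∈ Ii d0 := (hSmem d0).1 hd0S
      have hyd0' := hyd0
      rw [hIicc d0, mem_Icc] at hyd0'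
      by_cases hzM : z ≤ M
      · refine ⟨d0, hyd0, ?_⟩
        rw [hIicc d0, mem_Icc]
        exact ⟨le_trans hyd0'.1 hyz, hzM⟩
      · push_neg at hzM
        have hyM : y ≤ M := hyd0'.2
        have hMIcc : M ∈ Icc A B := by
          rw [hMdef]
          have h9 := hIK d0 (by rw [hIicc d0]; exact ⟨hfm d0, le_refl _⟩)
          rw [hK] at h9; exact h9
        have hwn : ∀ n : ℕ, ∃ ee, M + (z - M) / (n + 1) ∈ Ii ee := by
          intro n
          apply hcover
          rw [hK, mem_Icc]
          have hp : (0:ℝ) < (n:ℝ) + 1 := by positivity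
          constructor
          · have h8 : (0:ℝ) ≤ (z - M) / (n + 1) := le_of_lt (div_pos (by linarith) hp)
            linarith [hMIcc.1]
          · have h8 : (z - M) / (n + 1) ≤ z - M := div_le_self (by linarith) (by linarith)
            linarith [hzI.2]
        choose g hg using hwn
        obtain ⟨e, he⟩ := Finite.exists_infinite_fiber g
        have heInf : (g ⁻¹' {e} : Set ℕ).Infinite := Set.infinite_coe_iff.1 he
        obtain ⟨n1, hn1⟩ := heInf.nonempty
        have hgen : ∀ n ∈ (g ⁻¹' {e} : Set ℕ), f e A ≤ M + (z - M) / (n + 1)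
            ∧ M + (z - M) / (n + 1) ≤ f e B := by
          intro n hn
          rw [Set.mem_preimage, Set.mem_singleton_iff] at hn
          have h2 := hg n
          rw [hn, hIicc e, mem_Icc] at h2
          exact h2
        have heB : M < f e B := by
          have h2 := (hgen n1 hn1).2
          have hp : (0:ℝ) < ((n1:ℝ) + 1) := by positivity
          have h8 : (0:ℝ) < (z - M) / (n1 + 1) := div_pos (by linarith) hp
          linarith
        have heA : f e A ≤ M := by
          by_contra hc
          push_neg at hc
          obtain ⟨n, hnm, hnN⟩ := heInf.exists_gt (Nat.ceil ((z - M) / (f e A - M)))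
          have h2 := (hgen n hnm).1
          have hq : (z - M) / (f e A - M) < (n:ℝ) + 1 := by
            calc (z - M) / (f e A - M) ≤ (Nat.ceil ((z - M) / (f e A - M)) : ℝ) :=
                  Nat.le_ceil _
              _ < (n:ℝ) + 1 := by exact_mod_cast Nat.lt_succ_of_lt hnN
          rw [div_lt_iff₀ (by linarith : (0:ℝ) < f e A - M)] at hq
          have hq2 : (z - M) / ((n:ℝ) + 1) < f e A - M := by
            rw [div_lt_iff₀ (by positivity : (0:ℝ) < (n:ℝ) + 1)]
            linarith [mul_comm ((n:ℝ) + 1) (f e A - M)]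
          linarith
        have hMe : M ∈ Ii e := by rw [hIicc e, mem_Icc]; exact ⟨heA, heB.le⟩
        have hMd0 : M ∈ Ii d0 := by
          rw [hIicc d0, mem_Icc, hMdef]
          exact ⟨hfm d0, le_refl _⟩
        have hed0 : e ≠ d0 := by
          intro hh
          have heS : e ∈ S := by rw [hh]; exact hd0S
          exact absurd (hMsup e heS) (not_le.2 heB)
        obtain ⟨k, hkc⟩ := hcomplete e d0 hed0 ⟨M, hMe, hMd0⟩
        have hMH : M ∈ Icc (aH k) (bH k) := by
          rw [← hH k]
          rcases hkc with ⟨ha, hb⟩ | ⟨ha, hb⟩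
          · exact ⟨by rw [← ha]; exact hMe, by rw [← hb]; exact hMd0⟩
          · exact ⟨by rw [← hb]; exact hMd0, by rw [← ha]; exact hMe⟩
        have hya : y < aH k := by
          have h9 : y ∉ Icc (aH k) (bH k) := fun hmem => hyH (mem_iUnion.2 ⟨k, hmem⟩)
          rw [mem_Icc, not_and_or] at h9
          rcases h9 with h9 | h9
          · push_neg at h9; exact h9
          · push_neg at h9; exfalso; linarith [hMH.2]
        have habs : z - y < W := by
          have h9 := abs_lt.1 hd; linarith [h9.1]
        have hzH : z ∈ Icc (aH k) (bH k) := by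
          rw [mem_Icc]
          exact ⟨le_trans hMH.1 hzM.le, by linarith [hW k]⟩
        refine ⟨d0, hyd0, ?_⟩
        rw [← hH k] at hzH
        rcases hkc with ⟨ha, hb⟩ | ⟨ha, hb⟩
        · rw [hb]; exact hzH.2
        · rw [hb]; exact hzH.1
    · -- `z < y` : walk to the left
      obtain ⟨d0, hd0S, hd0⟩ := Finset.exists_mem_eq_inf' hSne (fun d => f d A)
      set M := f d0 A with hMdef
      have hMinf : ∀ d ∈ S, M ≤ f d A := by
        intro d hdm
        rw [← hd0]
        exact Finset.inf'_le (fun d => f d A) hdm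
      have hyd0 : y ∈ Ii d0 := (hSmem d0).1 hd0S
      have hyd0' := hyd0
      rw [hIicc d0, mem_Icc] at hyd0'
      by_cases hzM : M ≤ z
      · refine ⟨d0, hyd0, ?_⟩
        rw [hIicc d0, mem_Icc]
        exact ⟨hzM, le_trans hzy.le hyd0'.2⟩
      · push_neg at hzM
        have hyM : M ≤ y := hyd0'.1
        have hMIcc : M ∈ Icc A B := by
          rw [hMdef]
          have h9 := hIK d0 (by rw [hIicc d0]; exact ⟨le_refl _, hfm d0⟩)
          rw [hK] at h9; exact h9
        have hwn : ∀ n : ℕ, ∃ ee, M - (M - z) / (n + 1) ∈ Ii ee := by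
          intro n
          apply hcover
          rw [hK, mem_Icc]
          have hp : (0:ℝ) < (n:ℝ) + 1 := by positivity
          constructor
          · have h8 : (M - z) / (n + 1) ≤ M - z := div_le_self (by linarith) (by linarith)
            linarith [hzI.1]
          · have h8 : (0:ℝ) ≤ (M - z) / (n + 1) := le_of_lt (div_pos (by linarith) hp)
            linarith [hMIcc.2]
        choose g hg using hwn
        obtain ⟨e, he⟩ := Finite.exists_infinite_fiber g
        have heInf : (g ⁻¹' {e} : Set ℕ).Infinite := Set.infinite_coe_iff.1 he
        obtain ⟨n1, hn1⟩ := heInf.nonempty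
        have hgen : ∀ n ∈ (g ⁻¹' {e} : Set ℕ), f e A ≤ M - (M - z) / (n + 1)
            ∧ M - (M - z) / (n + 1) ≤ f e B := by
          intro n hn
          rw [Set.mem_preimage, Set.mem_singleton_iff] at hn
          have h2 := hg n
          rw [hn, hIicc e, mem_Icc] at h2
          exact h2
        have heA : f e A < M := by
          have h2 := (hgen n1 hn1).1
          have hp : (0:ℝ) < ((n1:ℝ) + 1) := by positivity
          have h8 : (0:ℝ) < (M - z) / (n1 + 1) := div_pos (by linarith) hp
          linarith
        have heB : M ≤ f e B := by
          by_contra hc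
          push_neg at hc
          obtain ⟨n, hnm, hnN⟩ := heInf.exists_gt (Nat.ceil ((M - z) / (M - f e B)))
          have h2 := (hgen n hnm).2
          have hq : (M - z) / (M - f e B) < (n:ℝ) + 1 := by
            calc (M - z) / (M - f e B) ≤ (Nat.ceil ((M - z) / (M - f e B)) : ℝ) :=
                  Nat.le_ceil _
              _ < (n:ℝ) + 1 := by exact_mod_cast Nat.lt_succ_of_lt hnN
          rw [div_lt_iff₀ (by linarith : (0:ℝ) < M - f e B)] at hq
          have hq2 : (M - z) / ((n:ℝ) + 1) < M - f e B := by
            rw [div_lt_iff₀ (by positivity : (0:ℝ) < (n:ℝ) + 1)]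
            linarith [mul_comm ((n:ℝ) + 1) (M - f e B)]
          linarith
        have hMe : M ∈ Ii e := by rw [hIicc e, mem_Icc]; exact ⟨heA.le, heB⟩
        have hMd0 : M ∈ Ii d0 := by
          rw [hIicc d0, mem_Icc, hMdef]
          exact ⟨le_refl _, hfm d0⟩
        have hed0 : e ≠ d0 := by
          intro hh
          have heS : e ∈ S := by rw [hh]; exact hd0S
          exact absurd (hMinf e heS) (not_le.2 heA)
        obtain ⟨k, hkc⟩ := hcomplete e d0 hed0 ⟨M, hMe, hMd0⟩
        have hMH : M ∈ Icc (aH k) (bH k) := by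
          rw [← hH k]
          rcases hkc with ⟨ha, hb⟩ | ⟨ha, hb⟩
          · exact ⟨by rw [← ha]; exact hMe, by rw [← hb]; exact hMd0⟩
          · exact ⟨by rw [← hb]; exact hMd0, by rw [← ha]; exact hMe⟩
        have hyb : bH k < y := by
          have h9 : y ∉ Icc (aH k) (bH k) := fun hmem => hyH (mem_iUnion.2 ⟨k, hmem⟩)
          rw [mem_Icc, not_and_or] at h9
          rcases h9 with h9 | h9
          · push_neg at h9; exfalso; linarith [hMH.1]
          · push_neg at h9; exact h9
        have habs : y - z < W := (abs_lt.1 hd).2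
        have hzH : z ∈ Icc (aH k) (bH k) := by
          rw [mem_Icc]
          exact ⟨by linarith [hW k], le_trans hzM.le hMH.2⟩
        refine ⟨d0, hyd0, ?_⟩
        rw [← hH k] at hzH
        rcases hkc with ⟨ha, hb⟩ | ⟨ha, hb⟩
        · rw [hb]; exact hzH.2
        · rw [hb]; exact hzH.1
  -- characterization of Ut
  have projapp : ∀ (w : List (Fin m)) (t : ℕ → Fin m),
      proj (appSeq w t) = w.foldr f (proj t) := by
    intro w
    induction w with
    | nil => intro t; rw [appSeq_nil]; rfl
    | cons a w ih => intro t; rw [appSeq_cons, projcons, List.foldr_cons, ih]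
  have hchar : ∀ i : ℕ → Fin m, i ∈ Ut ↔ ∀ n, proj (shiftSeq n i) ∉ HH := by
    intro i
    rw [hUt, Set.mem_preimage, hU, Set.mem_setOf_eq]
    constructor
    · rintro ⟨hKm, j, hjt, hjun⟩ n hmem
      obtain ⟨k, hk⟩ := mem_iUnion.1 hmem
      rw [← hH k] at hk
      obtain ⟨ya, hya, hfa⟩ := hk.1
      obtain ⟨yb, hyb, hfb⟩ := hk.2
      obtain ⟨ta, hta⟩ := hcode ya (by rw [← hK]; exact hya)
      obtain ⟨tb, htb⟩ := hcode yb (by rw [← hK]; exact hyb)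
      set i1 := appSeq (preWord i n) (consSeq (ik k) ta) with hi1
      set i2 := appSeq (preWord i n) (consSeq (jk k) tb) with hi2
      have hp1 : proj i1 = proj i := by
        rw [hi1, projapp, projcons, hta, hfa, ← projPre]
      have hp2 : proj i2 = proj i := by
        rw [hi2, projapp, projcons, htb, hfb, ← projPre]
      have ht1 : Tendsto (ifsIter m f i1) atTop (𝓝 (proj i)) := by
        rw [← hp1]; exact hproj i1
      have ht2 : Tendsto (ifsIter m f i2) atTop (𝓝 (proj i)) := by
        rw [← hp2]; exact hproj i2
      have he1 : i1 = j := hjun i1 ht1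
      have he2 : i2 = j := hjun i2 ht2
      have hn1 : i1 n = ik k := by
        have h9 := appSeq_ge (preWord i n) (consSeq (ik k) ta) 0
        rw [preWord_length] at h9
        exact h9
      have hn2 : i2 n = jk k := by
        have h9 := appSeq_ge (preWord i n) (consSeq (jk k) tb) 0
        rw [preWord_length] at h9
        exact h9
      apply hkne k
      rw [← hn1, ← hn2, he1, he2]
    · intro h
      refine ⟨by rw [hK]; exact projK i, i, hproj i, ?_⟩
      intro j hj
      have hpj : proj j = proj i := tendsto_nhds_unique (hproj j) hj
      have hsh : ∀ n, proj (shiftSeq n j) = proj (shiftSeq n i) := by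
        intro n
        induction n with
        | zero => rw [shiftSeq_zero, shiftSeq_zero]; exact hpj
        | succ n ih =>
          have hjn : j n = i n := huniq _ (h n) _ _
            (by rw [← ih]; exact memIshift j n) (memIshift i n)
          have e1 : proj (shiftSeq (n + 1) j) = T (j n) (proj (shiftSeq n j)) := by
            have h2 := projF2 (shiftSeq n j)
            have h0 : (shiftSeq n j) 0 = j n := by simp [shiftSeq]
            rw [h0, shiftSeq_shiftSeq] at h2
            rw [h2, hTf]
          have e2 : proj (shiftSeq (n + 1) i) = T (i n) (proj (shiftSeq n i)) := by
            have h2 := projF2 (shiftSeq n i)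
            have h0 : (shiftSeq n i) 0 = i n := by simp [shiftSeq]
            rw [h0, shiftSeq_shiftSeq] at h2
            rw [h2, hTf]
          rw [e1, e2, hjn, ih]
      funext n
      exact huniq _ (h n) _ _ (by rw [← hsh n]; exact memIshift j n) (memIshift i n)
  -- the key lemma
  have hKL : ∀ e : ℝ, (∃ u, invIterWord m T u e ∈ Ho) →
      ∃ δ, 0 < δ ∧ ∀ t : ℕ → Fin m, proj t ∉ HH → |proj t - e| < δ →
        ∃ q, proj (shiftSeq q t) ∈ HH := by
    intro e hex0
    have hex : ∃ n, ∃ u : List (Fin m), u.length = n ∧ invIterWord m T u e ∈ Ho := by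
      obtain ⟨u, hu⟩ := hex0; exact ⟨u.length, u, rfl, hu⟩
    set n₀ := Nat.find hex with hn₀
    obtain ⟨u, hulen, huHo⟩ := Nat.find_spec hex
    have hmin : ∀ p, p < n₀ → invIterWord m T (u.take p) e ∉ Ho := by
      intro p hp hIn
      exact Nat.find_min hex hp ⟨u.take p, by rw [List.length_take, hulen]; omega, hIn⟩
    obtain ⟨l₀, hl₀⟩ := mem_iUnion.1 huHo
    set γ := min (invIterWord m T u e - aH l₀) (bH l₀ - invIterWord m T u e) with hγ
    have hl₀' := hl₀
    rw [mem_Ioo] at hl₀'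
    have hγ0 : 0 < γ := lt_min (sub_pos.2 hl₀'.1) (sub_pos.2 hl₀'.2)
    refine ⟨min W γ * rm ^ n₀, by positivity, ?_⟩
    intro t hty hclose
    by_contra hno
    push_neg at hno
    have hHoIcc : invIterWord m T u e ∈ Icc A B :=
      Ioo_subset_Icc_self (hHint l₀ (Ioo_subset_Icc_self hl₀))
    have hzK : ∀ p, invIterWord m T (u.take p) e ∈ Icc A B := fun p => hperm u p e hHoIcc
    have hdistp : ∀ p, p ≤ n₀ →
        |invIterWord m T (u.take p) (proj t) - invIterWord m T (u.take p) e|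
          < min W γ := by
      intro p hp
      have h1 := invIterWord_lip r c T hT (fun j => (hr j).1) rm hrm0 hrm (u.take p)
        (proj t) e
      have hlen : (u.take p).length = p := by rw [List.length_take, hulen]; omega
      rw [hlen] at h1
      have h2 : (1 / rm) ^ p * |proj t - e| < (1 / rm) ^ p * (min W γ * rm ^ n₀) :=
        mul_lt_mul_of_pos_left hclose (by positivity)
      have h3 : (1 / rm) ^ p * (min W γ * rm ^ n₀) ≤ min W γ := by
        rw [div_pow, one_pow, one_div_mul_eq_div,
          div_le_iff₀ (by positivity : (0:ℝ) < rm ^ p)]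
        exact mul_le_mul_of_nonneg_left (pow_le_pow_of_le_one hrm0.le hrm1 hp)
          (le_of_lt (lt_min hW0 hγ0))
      exact lt_of_le_of_lt h1 (lt_of_lt_of_le h2 h3)
    have main : ∀ p, p ≤ n₀ → preWord t p = u.take p := by
      intro p
      induction p with
      | zero => intro _; rw [preWord_zero, List.take_zero]
      | succ p ih =>
        intro hp1
        have hp : p ≤ n₀ := by omega
        have hplt : p < n₀ := by omega
        have hplen : p < u.length := by rw [hulen]; omega
        have hpre := ih hp
        set z := invIterWord m T (u.take p) e with hz
        have hyz : proj (shiftSeq p t) = invIterWord m T (u.take p) (proj t) := by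
          rw [projTpre t p, hpre]
        have hdp : |proj (shiftSeq p t) - z| < min W γ := by
          rw [hyz, hz]; exact hdistp p hp
        have hdpW : |proj (shiftSeq p t) - z| < W := lt_of_lt_of_le hdp (min_le_left _ _)
        have hzIcc : z ∈ Icc A B := hzK p
        have hypH : proj (shiftSeq p t) ∉ HH := hno p
        have hypK : proj (shiftSeq p t) ∈ Icc A B := projK _
        have htake : u.take (p + 1) = u.take p ++ [u[p]] := by
          rw [List.take_succ, List.getElem?_eq_getElem hplen]
          rfl
        have hz1 : invIterWord m T (u.take (p + 1)) e = T (u[p]) z := by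
          rw [htake, invIterWord_append]
          rfl
        have hz1K : T (u[p]) z ∈ Icc A B := by rw [← hz1]; exact hzK (p + 1)
        have hzIu : z ∈ Ii (u[p]) := ⟨T (u[p]) z, by rw [hK]; exact hz1K, hfT _ _⟩
        have hzHo : z ∉ Ho := hmin p hplt
        obtain ⟨d, hyd, hzd⟩ := hstar (proj (shiftSeq p t)) z hypK hzIcc hypH hdpW
        have htp : t p = d := huniq _ hypH _ _ (memIshift t p) hyd
        have hgoal : t p = u[p] := by
          by_cases hzH : z ∈ HH
          · obtain ⟨l, hzl⟩ := mem_iUnion.1 hzH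
            have hnIoo : z ∉ Ioo (aH l) (bH l) := fun hcon => hzHo (mem_iUnion.2 ⟨l, hcon⟩)
            have hzl' := hzl
            rw [mem_Icc] at hzl'
            have hzend : z = aH l ∨ z = bH l := by
              rw [mem_Ioo, not_and_or] at hnIoo
              rcases hnIoo with h9 | h9
              · left; push_neg at h9; linarith [hzl'.1]
              · right; push_neg at h9; linarith [hzl'.2]
            have hpd : d = ik l ∨ d = jk l := hpair z l d hzl hzd
            have hpu : u[p] = ik l ∨ u[p] = jk l := hpair z l _ hzl hzIu
            by_cases hdu : d = u[p]
            · rw [htp, hdu]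
            exfalso
            have hcases : (d = ik l ∧ u[p] = jk l) ∨ (d = jk l ∧ u[p] = ik l) := by
              rcases hpd with h9 | h9 <;> rcases hpu with h8 | h8
              · exact absurd (h9.trans h8.symm) hdu
              · exact Or.inl ⟨h9, h8⟩
              · exact Or.inr ⟨h9, h8⟩
              · exact absurd (h9.trans h8.symm) hdu
            have hcomb : invIterWord m T u e
                = invIterWord m T (u.drop (p + 1)) (invIterWord m T (u.take (p + 1)) e) := by
              conv_lhs => rw [← List.take_append_drop (p + 1) u]
              rw [invIterWord_append]
            rcases hzend with hza | hzb
            · -- z is a left endpoint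
              have hylt : proj (shiftSeq p t) < z := by
                have h9 : proj (shiftSeq p t) ∉ Icc (aH l) (bH l) :=
                  fun hcon => hypH (mem_iUnion.2 ⟨l, hcon⟩)
                rw [mem_Icc, not_and_or] at h9
                rcases h9 with h9 | h9
                · push_neg at h9; rw [hza]; exact h9
                · push_neg at h9
                  exfalso
                  have habs := abs_lt.1 hdpW
                  have h7 := hW l
                  rw [hza] at habs
                  linarith [habs.2]
              have hmax : aH l = max (f (ik l) A) (f (jk l) A) := (hends l).1
              have hzfa : z = f d A ∨ z = f (u[p]) A := by
                rcases hcases with ⟨h8, h9⟩ | ⟨h8, h9⟩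
                · rw [hza, hmax, h8, h9]; exact max_choice _ _
                · rw [hza, hmax, h8, h9]
                  rcases max_choice (f (ik l) A) (f (jk l) A) with h7 | h7
                  · right; exact h7
                  · left; exact h7
              rcases hzfa with h9 | h9
              · have h8 := hyd
                rw [hIicc d, mem_Icc] at h8
                rw [h9] at hylt
                linarith [h8.1]
              · have hTz : T (u[p]) z = A := by rw [h9, hTf]
                have hfin : invIterWord m T u e ≤ A := by
                  rw [hcomb, hz1, hTz]
                  exact escA _ _ (le_refl _)
                have h7 := hHint l₀ (Ioo_subset_Icc_self hl₀)
                rw [mem_Ioo] at h7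
                linarith [h7.1]
            · -- z is a right endpoint
              have hygt : z < proj (shiftSeq p t) := by
                have h9 : proj (shiftSeq p t) ∉ Icc (aH l) (bH l) :=
                  fun hcon => hypH (mem_iUnion.2 ⟨l, hcon⟩)
                rw [mem_Icc, not_and_or] at h9
                rcases h9 with h9 | h9
                · push_neg at h9
                  exfalso
                  have habs := abs_lt.1 hdpW
                  have h7 := hW l
                  rw [hzb] at habs
                  linarith [habs.1]
                · push_neg at h9; rw [hzb]; exact h9
              have hmin' : bH l = min (f (ik l) B) (f (jk l) B) := (hends l).2
              have hzfb : z = f d B ∨ z = f (u[p]) B := by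
                rcases hcases with ⟨h8, h9⟩ | ⟨h8, h9⟩
                · rw [hzb, hmin', h8, h9]; exact min_choice _ _
                · rw [hzb, hmin', h8, h9]
                  rcases min_choice (f (ik l) B) (f (jk l) B) with h7 | h7
                  · right; exact h7
                  · left; exact h7
              rcases hzfb with h9 | h9
              · have h8 := hyd
                rw [hIicc d, mem_Icc] at h8
                rw [h9] at hygt
                linarith [h8.2]
              · have hTz : T (u[p]) z = B := by rw [h9, hTf]
                have hfin : B ≤ invIterWord m T u e := by
                  rw [hcomb, hz1, hTz]
                  exact escB _ _ (le_refl _)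
                have h7 := hHint l₀ (Ioo_subset_Icc_self hl₀)
                rw [mem_Ioo] at h7
                linarith [h7.2]
          · rw [htp]
            exact huniq z hzH _ _ hzd hzIu
        rw [preWord_succ, hpre, htake, hgoal]
    have hfin := main n₀ (le_refl _)
    have hteq : u.take n₀ = u := List.take_of_length_le (by omega)
    have hy0 : proj (shiftSeq n₀ t) = invIterWord m T u (proj t) := by
      rw [projTpre t n₀, hfin, hteq]
    have hdfin : |proj (shiftSeq n₀ t) - invIterWord m T u e| < γ := by
      have h9 := hdistp n₀ (le_refl _)
      rw [hteq] at h9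
      rw [hy0]
      exact lt_of_lt_of_le h9 (min_le_right _ _)
    have hfinal : proj (shiftSeq n₀ t) ∈ Ioo (aH l₀) (bH l₀) := by
      have habs := abs_lt.1 hdfin
      rw [mem_Ioo]
      constructor
      · have h8 : γ ≤ invIterWord m T u e - aH l₀ := min_le_left _ _
        linarith [habs.1]
      · have h8 : γ ≤ bH l₀ - invIterWord m T u e := min_le_right _ _
        linarith [habs.2]
    exact hno n₀ (mem_iUnion.2 ⟨l₀, Ioo_subset_Icc_self hfinal⟩)
  -- assemble
  choose δa hδa0 hδa using fun k => hKL (aH k) (hyp k).1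
  choose δb hδb0 hδb using fun k => hKL (bH k) (hyp k).2
  obtain ⟨Δ, hΔ0, hΔa, hΔb⟩ : ∃ Δ, 0 < Δ ∧ (∀ k, Δ ≤ δa k) ∧ (∀ k, Δ ≤ δb k) := by
    refine ⟨Finset.univ.inf' ⟨k0, Finset.mem_univ _⟩ (fun k => min (δa k) (δb k)), ?_, ?_, ?_⟩
    · exact (Finset.lt_inf'_iff _).2 fun k _ => lt_min (hδa0 k) (hδb0 k)
    · intro k
      exact le_trans (Finset.inf'_le _ (Finset.mem_univ k)) (min_le_left _ _)
    · intro k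
      exact le_trans (Finset.inf'_le _ (Finset.mem_univ k)) (min_le_right _ _)
  obtain ⟨L, hL⟩ : ∃ L : ℕ, ρ ^ L * (B - A) < Δ := by
    obtain ⟨L, hL⟩ := exists_pow_lt_of_lt_one (div_pos hΔ0 (sub_pos.2 hAB)) hρ1
    refine ⟨L, ?_⟩
    rw [← lt_div_iff₀ (sub_pos.2 hAB)]
    exact lt_of_le_of_lt (le_of_eq rfl) hL
  refine ⟨L, Set.Finite.toFinset (Set.toFinite
    {w : Fin L → Fin m | ∀ t : ℕ → Fin m, (∀ p : Fin L, t p = w p) →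
      ∃ q, proj (shiftSeq q t) ∈ HH}), ?_⟩
  ext i
  rw [Set.mem_setOf_eq, hchar i]
  constructor
  · intro h n hmem
    rw [Set.Finite.mem_toFinset, Set.mem_setOf_eq] at hmem
    obtain ⟨q, hq⟩ := hmem (shiftSeq n i) (fun p => by simp [shiftSeq, Nat.add_comm])
    rw [shiftSeq_shiftSeq] at hq
    exact h _ hq
  · intro h n
    by_contra hx
    apply h n
    rw [Set.Finite.mem_toFinset, Set.mem_setOf_eq]
    intro t ht
    obtain ⟨k, hxk⟩ := mem_iUnion.1 hx
    by_cases hyH : proj t ∈ HH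
    · exact ⟨0, by rwa [shiftSeq_zero]⟩
    have hagree : ∀ q, q < L → t q = (shiftSeq n i) q := by
      intro q hq
      have := ht ⟨q, hq⟩
      simpa [shiftSeq, Nat.add_comm] using this
    have hdist : |proj t - proj (shiftSeq n i)| ≤ ρ ^ L * (B - A) :=
      projdist t (shiftSeq n i) L hagree
    have hyIcc : proj t ∉ Icc (aH k) (bH k) := fun hmem => hyH (mem_iUnion.2 ⟨k, hmem⟩)
    rw [mem_Icc, not_and_or] at hyIcc
    rw [mem_Icc] at hxk
    rcases hyIcc with hlt | hgt
    · push_neg at hlt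
      have hclose : |proj t - aH k| < δa k := by
        have h1 : |proj t - aH k| ≤ |proj t - proj (shiftSeq n i)| := by
          rw [abs_sub_comm (proj t) (aH k), abs_sub_comm (proj t) (proj (shiftSeq n i)),
            abs_of_nonneg (by linarith : (0:ℝ) ≤ aH k - proj t),
            abs_of_nonneg (by linarith [hxk.1] : (0:ℝ) ≤ proj (shiftSeq n i) - proj t)]
          linarith [hxk.1]
        calc |proj t - aH k| ≤ ρ ^ L * (B - A) := le_trans h1 hdist
          _ < Δ := hL
          _ ≤ δa k := hΔa k
      exact hδa k t hyH hclose
    · push_neg at hgt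
      have hclose : |proj t - bH k| < δb k := by
        have h1 : |proj t - bH k| ≤ |proj t - proj (shiftSeq n i)| := by
          rw [abs_of_nonneg (by linarith : (0:ℝ) ≤ proj t - bH k),
            abs_of_nonneg (by linarith [hxk.2] : (0:ℝ) ≤ proj t - proj (shiftSeq n i))]
          linarith [hxk.2]
        calc |proj t - bH k| ≤ ρ ^ L * (B - A) := le_trans h1 hdist
          _ < Δ := hL
          _ ≤ δb k := hΔb k
      exact hδb k t hyH hclose
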